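/- Let X_n = R_n · S with R_1, R_2, ... i.i.d. with continuous cdf F_R on (0,∞), and S uniform on the unit simplex independent of the R_n. Say observation n is a record if R_n > R_k for all k < n. Then the probability that observation n is a record and falls in [x_1,∞)×⋯×[x_d,∞) equals ∫ max(0, 1 - (x_1+⋯+x_d)/r)^{d-1} F_R(r)^{n-1} dF_R(r), and the expected number of records in that set equals ∫ max(0, 1 - (x_1+⋯+x_d)/r)^{d-1} dF_R(r)/(1 - F_R(r)). -/

import Mathlib

open MeasureTheory Set ProbabilityTheory
open scoped ENNReal BigOperators

/-- Let `X_n = R_n · S` with `(R_n)` i.i.d. with law `μ` and continuous cdf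
`F_R` on `(0,∞)`, and `S` uniform on the unit simplex, independent of the whole
sequence `(R_n)`.  Observation `n` is a record if `R_n > R_k` for all `k < n`
(there are `n` previous observations).  Then the probability that observation
`n` is a record falling in `[x_1,∞) × ⋯ × [x_d,∞)` equals
`∫ max(0, 1 - (∑ x_i)/r)^{d-1} F_R(r)^n dμ(r)`, and the expected number of
records in that set equals `∫ max(0, 1 - (∑ x_i)/r)^{d-1} (1 - F_R r)⁻¹ dμ(r)`. -/
theorem stmt16 (d : ℕ) (hd : 0 < d)
    {Ω : Type*} [MeasurableSpace Ω] (P : Measure Ω) [IsProbabilityMeasure P]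
    (R : ℕ → Ω → ℝ) (hRmeas : ∀ n, Measurable (R n))
    (hRiid : iIndepFun R P)
    (μ : Measure ℝ) (hident : ∀ n, Measure.map (R n) P = μ)
    (hpos : ∀ n ω, 0 < R n ω)
    (F : ℝ → ℝ) (hF : ∀ r, F r = (μ (Iic r)).toReal) (hFcont : Continuous F)
    (S : Ω → Fin d → ℝ) (hSmeas : Measurable S)
    (hindep : IndepFun S (fun ω => fun n => R n ω) P)
    (hsimplex : ∀ s : Fin d → ℝ, (∀ i, 0 ≤ s i) →
      P {ω | ∀ i, s i < S ω i} = ENNReal.ofReal (max 0 (1 - ∑ i, s i) ^ (d - 1)))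
    (x : Fin d → ℝ) (hx : ∀ i, 0 ≤ x i) :
    (∀ n : ℕ,
      P {ω | (∀ k < n, R k ω < R n ω) ∧ ∀ i, x i ≤ R n ω * S ω i} =
        ∫⁻ r, ENNReal.ofReal (max 0 (1 - (∑ i, x i) / r) ^ (d - 1) * F r ^ n) ∂μ) ∧
    (∑' n : ℕ, P {ω | (∀ k < n, R k ω < R n ω) ∧ ∀ i, x i ≤ R n ω * S ω i}) =
      ∫⁻ r, ENNReal.ofReal (max 0 (1 - (∑ i, x i) / r) ^ (d - 1) * (1 - F r)⁻¹) ∂μ := by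
  classical
  set T : ℝ := ∑ i, x i with hT
  set g : ℝ → ℝ := fun r => max 0 (1 - T / r) ^ (d - 1) with hgdef
  have hgnonneg : ∀ r, 0 ≤ g r := fun r => pow_nonneg (le_max_left _ _) _
  have hgmeas : Measurable g :=
    ((measurable_const.max (measurable_const.sub
      (measurable_const.div measurable_id))).pow_const _)
  haveI hμprob : IsProbabilityMeasure μ := by
    rw [← hident 0]; exact Measure.isProbabilityMeasure_map (hRmeas 0).aemeasurable
  have hFmap : ∀ r, ENNReal.ofReal (F r) = μ (Iic r) := fun r => by
    rw [hF]; exact ENNReal.ofReal_toReal (measure_ne_top μ _)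
  have hF0 : ∀ r, 0 ≤ F r := fun r => by rw [hF]; exact ENNReal.toReal_nonneg
  have hFle1 : ∀ r, F r ≤ 1 := fun r => by
    rw [hF]
    have : μ (Iic r) ≤ 1 := prob_le_one
    calc (μ (Iic r)).toReal ≤ (1 : ℝ≥0∞).toReal :=
          ENNReal.toReal_mono ENNReal.one_ne_top this
      _ = 1 := by simp
  -- no atoms
  have hatom : ∀ r : ℝ, μ {r} = 0 := by
    intro r
    have key : ∀ k : ℕ, μ {r} ≤ ENNReal.ofReal (F r - F (r - 1 / (k + 1))) := by
      intro k
      have h1 : (0:ℝ) < 1 / (k + 1) := by positivity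
      have hsub : {r} ⊆ Ioc (r - 1 / (k + 1)) r := by
        intro y hy; rcases hy with rfl; exact ⟨by linarith, le_refl _⟩
      calc μ {r} ≤ μ (Ioc (r - 1 / (k + 1)) r) := measure_mono hsub
        _ = μ (Iic r) - μ (Iic (r - 1 / (k + 1))) := by
            rw [← Iic_sdiff_Iic,
              measure_diff (Iic_subset_Iic.mpr (by linarith))
                measurableSet_Iic.nullMeasurableSet (measure_ne_top μ _)]
        _ = ENNReal.ofReal (F r) - ENNReal.ofReal (F (r - 1 / (k + 1))) := by
            rw [hFmap, hFmap]
        _ = ENNReal.ofReal (F r - F (r - 1 / (k + 1))) :=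
            (ENNReal.ofReal_sub _ (hF0 _)).symm
    have htend : Filter.Tendsto
        (fun k : ℕ => ENNReal.ofReal (F r - F (r - 1 / (k + 1)))) Filter.atTop
        (nhds 0) := by
      have h1 : Filter.Tendsto (fun k : ℕ => r - 1 / ((k : ℝ) + 1)) Filter.atTop
          (nhds r) := by
        have := tendsto_one_div_add_atTop_nhds_zero_nat (𝕜 := ℝ)
        have := Filter.Tendsto.sub (tendsto_const_nhds (x := r)) this
        simpa using this
      have h2 : Filter.Tendsto (fun k : ℕ => F r - F (r - 1 / ((k : ℝ) + 1)))
          Filter.atTop (nhds 0) := by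
        have := Filter.Tendsto.sub (tendsto_const_nhds (x := F r))
          ((hFcont.tendsto r).comp h1)
        simpa using this
      have := (ENNReal.continuous_ofReal.tendsto 0).comp h2
      simpa [Function.comp_def] using this
    have : μ {r} ≤ 0 := ge_of_tendsto' htend key
    exact le_antisymm this (by simp)
  have hIio : ∀ r : ℝ, μ (Iio r) = ENNReal.ofReal (F r) := by
    intro r
    have : Iio r = Iic r \ {r} := by ext y; simp [lt_iff_le_and_ne]
    rw [this, measure_diff (by simp) (measurableSet_singleton r).nullMeasurableSet
      (by rw [hatom]; exact ENNReal.zero_ne_top), hatom, tsub_zero, hFmap]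
  -- S_i strictly positive a.s.
  have hSile : ∀ i, Measurable fun ω => S ω i := fun i =>
    (measurable_pi_apply i).comp hSmeas
  have hGmeas : MeasurableSet {ω | ∀ i, 0 < S ω i} := by
    rw [Set.setOf_forall]
    exact MeasurableSet.iInter fun i => measurableSet_lt measurable_const (hSile i)
  have hGfull : P {ω | ∀ i, 0 < S ω i} = 1 := by
    have := hsimplex 0 (fun i => le_refl 0)
    simpa using this
  -- the simplex survival function with ≤ instead of <
  have hsimplex_le : ∀ s : Fin d → ℝ, (∀ i, 0 ≤ s i) →
      P {ω | ∀ i, s i ≤ S ω i} = ENNReal.ofReal (max 0 (1 - ∑ i, s i) ^ (d - 1)) := by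
    intro s hs
    refine le_antisymm ?_ ?_
    · have key : ∀ k : ℕ, P {ω | ∀ i, s i ≤ S ω i} ≤
          ENNReal.ofReal (max 0 (1 - ∑ i, max (s i - 1 / (k + 1)) 0) ^ (d - 1)) := by
        intro k
        have h1 : (0:ℝ) < 1 / ((k:ℝ) + 1) := by positivity
        have hsub : {ω | ∀ i, s i ≤ S ω i} ∩ {ω | ∀ i, 0 < S ω i} ⊆
            {ω | ∀ i, max (s i - 1 / (k + 1)) 0 < S ω i} := by
          rintro ω ⟨h1', h2'⟩ i
          exact max_lt (by have := h1' i; linarith) (h2' i)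
        have hcompl : P ({ω | ∀ i, s i ≤ S ω i} \ {ω | ∀ i, 0 < S ω i}) = 0 := by
          have h0 : P {ω | ∀ i, 0 < S ω i}ᶜ = 0 := by
            rw [measure_compl hGmeas (measure_ne_top _ _), hGfull, measure_univ,
              tsub_self]
          exact measure_mono_null (diff_subset_compl _ _) h0
        calc P {ω | ∀ i, s i ≤ S ω i}
            ≤ P ({ω | ∀ i, s i ≤ S ω i} ∩ {ω | ∀ i, 0 < S ω i}) +
              P ({ω | ∀ i, s i ≤ S ω i} \ {ω | ∀ i, 0 < S ω i}) :=
              measure_le_inter_add_diff _ _ _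
          _ = P ({ω | ∀ i, s i ≤ S ω i} ∩ {ω | ∀ i, 0 < S ω i}) := by
              rw [hcompl, add_zero]
          _ ≤ P {ω | ∀ i, max (s i - 1 / (k + 1)) 0 < S ω i} := measure_mono hsub
          _ = ENNReal.ofReal (max 0 (1 - ∑ i, max (s i - 1 / (k + 1)) 0) ^ (d - 1)) :=
              hsimplex _ (fun i => le_max_right _ _)
      have htend : Filter.Tendsto
          (fun k : ℕ => ENNReal.ofReal
            (max 0 (1 - ∑ i, max (s i - 1 / (k + 1)) 0) ^ (d - 1))) Filter.atTop
          (nhds (ENNReal.ofReal (max 0 (1 - ∑ i, s i) ^ (d - 1)))) := by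
        have h1 : Filter.Tendsto (fun k : ℕ => (1:ℝ) / ((k:ℝ) + 1)) Filter.atTop
            (nhds 0) := tendsto_one_div_add_atTop_nhds_zero_nat
        have h2 : Filter.Tendsto (fun k : ℕ => ∑ i, max (s i - 1 / ((k:ℝ) + 1)) 0)
            Filter.atTop (nhds (∑ i, s i)) := by
          have : ∀ i : Fin d, Filter.Tendsto
              (fun k : ℕ => max (s i - 1 / ((k:ℝ) + 1)) 0) Filter.atTop
              (nhds (s i)) := by
            intro i
            have := Filter.Tendsto.max
              (Filter.Tendsto.sub (tendsto_const_nhds (x := s i)) h1)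
              (tendsto_const_nhds (x := (0:ℝ)))
            simpa [max_eq_left (hs i)] using this
          exact tendsto_finset_sum _ fun i _ => this i
        have h3 : Continuous fun t : ℝ => ENNReal.ofReal (max 0 (1 - t) ^ (d - 1)) :=
          ENNReal.continuous_ofReal.comp
            ((continuous_const.max (continuous_const.sub continuous_id)).pow _)
        exact (h3.tendsto _).comp h2
      exact ge_of_tendsto' htend key
    · rw [← hsimplex s hs]
      exact measure_mono fun ω h i => (h i).le
  -- probability of the scaled box
  have hSset : ∀ t : ℝ, 0 < t →
      P {ω | ∀ i, x i ≤ t * S ω i} = ENNReal.ofReal (g t) := by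
    intro t ht
    have heq : {ω | ∀ i, x i ≤ t * S ω i} = {ω | ∀ i, x i / t ≤ S ω i} := by
      ext ω
      exact forall_congr' fun i => by rw [div_le_iff₀ ht, mul_comm]
    rw [heq, hsimplex_le _ (fun i => div_nonneg (hx i) ht.le)]
    congr 2
    rw [← Finset.sum_div]
  -- per-n main formula
  have main : ∀ n : ℕ,
      P {ω | (∀ k < n, R k ω < R n ω) ∧ ∀ i, x i ≤ R n ω * S ω i} =
        ∫⁻ r, ENNReal.ofReal (g r * F r ^ n) ∂μ := by
    intro n
    set W : Ω → ℕ → ℝ := fun ω k => R k ω with hWdef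
    have hW : Measurable W := measurable_pi_lambda _ hRmeas
    set ν : Measure (Fin d → ℝ) := Measure.map S P with hνdef
    set ρ : Measure (ℕ → ℝ) := Measure.map W P with hρdef
    haveI : IsProbabilityMeasure ν := Measure.isProbabilityMeasure_map hSmeas.aemeasurable
    haveI : IsProbabilityMeasure ρ := Measure.isProbabilityMeasure_map hW.aemeasurable
    have hpair : Measure.map (fun ω => (S ω, W ω)) P = ν.prod ρ :=
      (indepFun_iff_map_prod_eq_prod_map_map hSmeas.aemeasurable
        hW.aemeasurable).mp hindep
    set C : Set ((Fin d → ℝ) × (ℕ → ℝ)) :=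
      {p | (∀ k < n, p.2 k < p.2 n) ∧ ∀ i, x i ≤ p.2 n * p.1 i} with hCdef
    have hrecmeas : MeasurableSet {y : ℕ → ℝ | ∀ k < n, y k < y n} := by
      have heq : {y : ℕ → ℝ | ∀ k < n, y k < y n} =
          ⋂ (k : ℕ) (_ : k < n), {y : ℕ → ℝ | y k < y n} := by
        ext y; simp
      rw [heq]
      exact MeasurableSet.iInter fun k => MeasurableSet.iInter fun _ =>
        measurableSet_lt (measurable_pi_apply k) (measurable_pi_apply n)
    have hC : MeasurableSet C := by
      have heq2 : C = (Prod.snd ⁻¹' {y : ℕ → ℝ | ∀ k < n, y k < y n}) ∩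
          ⋂ i : Fin d, {p : (Fin d → ℝ) × (ℕ → ℝ) | x i ≤ p.2 n * p.1 i} := by
        ext p; simp [hCdef]
      rw [heq2]
      exact (hrecmeas.preimage measurable_snd).inter
        (MeasurableSet.iInter fun i => measurableSet_le measurable_const
          (Measurable.mul
            (show Measurable fun p : (Fin d → ℝ) × (ℕ → ℝ) => p.2 n from
              measurable_snd.eval)
            (show Measurable fun p : (Fin d → ℝ) × (ℕ → ℝ) => p.1 i from
              measurable_fst.eval)))
    have step1 : P {ω | (∀ k < n, R k ω < R n ω) ∧ ∀ i, x i ≤ R n ω * S ω i} =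
        (ν.prod ρ) C := by
      rw [← hpair, Measure.map_apply (hSmeas.prodMk hW) hC]
      rfl
    have step2 : (ν.prod ρ) C = ∫⁻ y, ν ((fun s => (s, y)) ⁻¹' C) ∂ρ :=
      Measure.prod_apply_symm hC
    have haepos : ∀ᵐ y ∂ρ, 0 < y n := by
      rw [hρdef, ae_map_iff hW.aemeasurable
        (measurableSet_lt measurable_const (measurable_pi_apply n))]
      exact Filter.Eventually.of_forall fun ω => hpos n ω
    have step3 : ∫⁻ y, ν ((fun s => (s, y)) ⁻¹' C) ∂ρ =
        ∫⁻ y, Set.indicator {y : ℕ → ℝ | ∀ k < n, y k < y n}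
          (fun y => ENNReal.ofReal (g (y n))) y ∂ρ := by
      refine lintegral_congr_ae ?_
      filter_upwards [haepos] with y hy
      by_cases hrec : ∀ k < n, y k < y n
      · have hset : (fun s => (s, y)) ⁻¹' C = {s : Fin d → ℝ | ∀ i, x i ≤ y n * s i} := by
          ext s
          simp only [hCdef, mem_preimage, mem_setOf_eq]
          exact and_iff_right hrec
        rw [hset, Set.indicator_of_mem
          (show y ∈ {y : ℕ → ℝ | ∀ k < n, y k < y n} from hrec)]
        have hmeas' : MeasurableSet {s : Fin d → ℝ | ∀ i, x i ≤ y n * s i} := by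
          rw [Set.setOf_forall]
          exact MeasurableSet.iInter fun i => measurableSet_le measurable_const
            (measurable_const.mul (measurable_pi_apply i))
        rw [hνdef, Measure.map_apply hSmeas hmeas']
        exact hSset (y n) hy
      · have hset : (fun s => (s, y)) ⁻¹' C = (∅ : Set (Fin d → ℝ)) := by
          ext s; simp [hCdef, hrec]
        rw [hset, Set.indicator_of_notMem
          (show y ∉ {y : ℕ → ℝ | ∀ k < n, y k < y n} from hrec), measure_empty]
    -- now express as an integral over Ω of a function of (R n, first n R's)
    set vec : Ω → Fin n → ℝ := fun ω k => R (k : ℕ) ω with hvecdef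
    have hvec : Measurable vec := measurable_pi_lambda _ fun k => hRmeas _
    set σ : Measure (Fin n → ℝ) := Measure.map vec P with hσdef
    haveI : IsProbabilityMeasure σ := Measure.isProbabilityMeasure_map hvec.aemeasurable
    set f₂ : ℝ × (Fin n → ℝ) → ℝ≥0∞ :=
      fun p => Set.indicator {p : ℝ × (Fin n → ℝ) | ∀ k : Fin n, p.2 k < p.1}
        (fun p => ENNReal.ofReal (g p.1)) p with hf₂def
    have hs₂ : MeasurableSet {p : ℝ × (Fin n → ℝ) | ∀ k : Fin n, p.2 k < p.1} := by
      have heq : {p : ℝ × (Fin n → ℝ) | ∀ k : Fin n, p.2 k < p.1} =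
          ⋂ (k : Fin n), {p : ℝ × (Fin n → ℝ) | p.2 k < p.1} := by
        ext p; simp
      rw [heq]
      exact MeasurableSet.iInter fun k =>
        measurableSet_lt (measurable_snd.eval) measurable_fst
    have hf₂ : Measurable f₂ :=
      ((hgmeas.comp measurable_fst).ennreal_ofReal).indicator hs₂
    have hindep2 : IndepFun (R n) vec P := by
      have hdisj : Disjoint ({n} : Finset ℕ) (Finset.range n) := by
        simp [Finset.disjoint_singleton_left]
      have h := hRiid.indepFun_finset {n} (Finset.range n) hdisj hRmeas
      have h1 : Measurable fun v : (({n} : Finset ℕ) : Type) → ℝ =>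
          v ⟨n, Finset.mem_singleton_self n⟩ := measurable_pi_apply _
      have h2 : Measurable fun (v : ((Finset.range n : Finset ℕ) : Type) → ℝ)
          (k : Fin n) => v ⟨(k : ℕ), Finset.mem_range.mpr k.2⟩ :=
        measurable_pi_lambda _ fun k => measurable_pi_apply _
      exact h.comp h1 h2
    have hpair2 : Measure.map (fun ω => (R n ω, vec ω)) P = μ.prod σ := by
      have := (indepFun_iff_map_prod_eq_prod_map_map (hRmeas n).aemeasurable
        hvec.aemeasurable).mp hindep2
      rw [this, hident n]
    have step4 : ∫⁻ y, Set.indicator {y : ℕ → ℝ | ∀ k < n, y k < y n}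
          (fun y => ENNReal.ofReal (g (y n))) y ∂ρ =
        ∫⁻ p, f₂ p ∂(μ.prod σ) := by
      have hm1 : Measurable fun y : ℕ → ℝ => ENNReal.ofReal (g (y n)) :=
        (hgmeas.comp (measurable_pi_apply n)).ennreal_ofReal
      rw [hρdef, lintegral_map (hm1.indicator hrecmeas) hW,
        ← hpair2, lintegral_map hf₂ ((hRmeas n).prodMk hvec)]
      refine lintegral_congr fun ω => ?_
      simp only [hf₂def]
      by_cases hrec : ∀ k < n, R k ω < R n ω
      · have hrec2 : ∀ k : Fin n, vec ω k < R n ω := fun k => hrec k k.2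
        rw [Set.indicator_of_mem (show W ω ∈ {y : ℕ → ℝ | ∀ k < n, y k < y n} from hrec),
          Set.indicator_of_mem (show (R n ω, vec ω) ∈
            {p : ℝ × (Fin n → ℝ) | ∀ k : Fin n, p.2 k < p.1} from hrec2)]
      · have hrec2 : ¬ ∀ k : Fin n, vec ω k < R n ω := by
          intro h
          exact hrec fun k hk => h ⟨k, hk⟩
        rw [Set.indicator_of_notMem
          (show W ω ∉ {y : ℕ → ℝ | ∀ k < n, y k < y n} from hrec),
          Set.indicator_of_notMem (show (R n ω, vec ω) ∉
            {p : ℝ × (Fin n → ℝ) | ∀ k : Fin n, p.2 k < p.1} from hrec2)]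
    have hσset : ∀ r : ℝ, σ {z : Fin n → ℝ | ∀ k, z k < r} = ENNReal.ofReal (F r) ^ n := by
      intro r
      have hmeasset : MeasurableSet {z : Fin n → ℝ | ∀ k, z k < r} := by
        rw [Set.setOf_forall]
        exact MeasurableSet.iInter fun k =>
          measurableSet_lt (measurable_pi_apply k) measurable_const
      rw [hσdef, Measure.map_apply hvec hmeasset]
      have hset : vec ⁻¹' {z : Fin n → ℝ | ∀ k, z k < r} =
          ⋂ k ∈ Finset.range n, R k ⁻¹' Iio r := by
        ext ω
        simp only [mem_preimage, mem_setOf_eq, Set.mem_iInter, Finset.mem_range,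
          mem_Iio]
        exact ⟨fun h k hk => h ⟨k, hk⟩, fun h k => h k k.2⟩
      rw [hset, hRiid.measure_inter_preimage_eq_mul (Finset.range n)
        (sets := fun _ => Iio r) (fun i _ => measurableSet_Iio)]
      have : ∀ k, P (R k ⁻¹' Iio r) = ENNReal.ofReal (F r) := fun k => by
        rw [← Measure.map_apply (hRmeas k) measurableSet_Iio, hident k, hIio]
      simp [this]
    have step5 : ∫⁻ p, f₂ p ∂(μ.prod σ) = ∫⁻ r, ENNReal.ofReal (g r * F r ^ n) ∂μ := by
      rw [lintegral_prod _ hf₂.aemeasurable]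
      refine lintegral_congr fun r => ?_
      have hinner : ∀ z : Fin n → ℝ, f₂ (r, z) =
          Set.indicator {z : Fin n → ℝ | ∀ k, z k < r}
            (fun _ => ENNReal.ofReal (g r)) z := by
        intro z
        simp only [hf₂def]
        by_cases h : ∀ k : Fin n, z k < r
        · rw [Set.indicator_of_mem
            (show (r, z) ∈ {p : ℝ × (Fin n → ℝ) | ∀ k : Fin n, p.2 k < p.1} from h),
            Set.indicator_of_mem (show z ∈ {z : Fin n → ℝ | ∀ k, z k < r} from h)]
        · rw [Set.indicator_of_notMem
            (show (r, z) ∉ {p : ℝ × (Fin n → ℝ) | ∀ k : Fin n, p.2 k < p.1} from h),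
            Set.indicator_of_notMem (show z ∉ {z : Fin n → ℝ | ∀ k, z k < r} from h)]
      have hmeasset : MeasurableSet {z : Fin n → ℝ | ∀ k, z k < r} := by
        rw [Set.setOf_forall]
        exact MeasurableSet.iInter fun k =>
          measurableSet_lt (measurable_pi_apply k) measurable_const
      calc ∫⁻ z, f₂ (r, z) ∂σ
          = ∫⁻ z, Set.indicator {z : Fin n → ℝ | ∀ k, z k < r}
              (fun _ => ENNReal.ofReal (g r)) z ∂σ := lintegral_congr hinner
        _ = ENNReal.ofReal (g r) * σ {z : Fin n → ℝ | ∀ k, z k < r} :=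
            lintegral_indicator_const hmeasset _
        _ = ENNReal.ofReal (g r) * ENNReal.ofReal (F r) ^ n := by rw [hσset]
        _ = ENNReal.ofReal (g r * F r ^ n) := by
            rw [← ENNReal.ofReal_pow (hF0 r), ← ENNReal.ofReal_mul (hgnonneg r)]
    rw [step1, step2, step3, step4, step5]
  -- a.e. F < 1
  have hFlt : ∀ᵐ r ∂μ, F r < 1 := by
    have hA : μ {r | F r = 1} = 0 := by
      by_cases hne : {r : ℝ | F r = 1}.Nonempty
      · have hmono : Monotone F := fun a b hab => by
          rw [hF, hF]
          exact ENNReal.toReal_mono (measure_ne_top _ _)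
            (measure_mono (Iic_subset_Iic.mpr hab))
        have hF00 : F 0 = 0 := by
          rw [hF]
          have : μ (Iic 0) = 0 := by
            rw [← hident 0, Measure.map_apply (hRmeas 0) measurableSet_Iic]
            have : R 0 ⁻¹' Iic 0 = ∅ := by
              ext ω; simp only [mem_preimage, mem_Iic, mem_empty_iff_false,
                iff_false, not_le]
              exact hpos 0 ω
            rw [this, measure_empty]
          rw [this]; simp
        have hbdd : BddBelow {r : ℝ | F r = 1} := by
          refine ⟨0, fun r hr => ?_⟩
          by_contra h
          push_neg at h
          have : F r ≤ F 0 := hmono h.le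
          rw [hF00, hr] at this
          linarith
        have hclosed : IsClosed {r : ℝ | F r = 1} :=
          isClosed_eq hFcont continuous_const
        set c := sInf {r : ℝ | F r = 1} with hcdef
        have hc : F c = 1 := hclosed.csInf_mem hne hbdd
        have hsub : {r : ℝ | F r = 1} ⊆ {c} ∪ Ioi c := by
          intro r hr
          rcases eq_or_lt_of_le (csInf_le hbdd hr) with h | h
          · left; exact h.symm
          · right; exact h
        have hIoi : μ (Ioi c) = 0 := by
          have : Ioi c = (Iic c)ᶜ := compl_Iic.symm
          rw [this, measure_compl measurableSet_Iic (measure_ne_top _ _),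
            measure_univ, ← hFmap, hc]
          simp
        refine le_antisymm ?_ (by simp)
        calc μ {r | F r = 1} ≤ μ ({c} ∪ Ioi c) := measure_mono hsub
          _ ≤ μ {c} + μ (Ioi c) := measure_union_le _ _
          _ = 0 := by rw [hatom, hIoi, add_zero]
      · rw [not_nonempty_iff_eq_empty] at hne
        rw [hne, measure_empty]
    rw [ae_iff]
    have : {r : ℝ | ¬ F r < 1} = {r | F r = 1} := by
      ext r
      simp only [mem_setOf_eq, not_lt]
      exact ⟨fun h => le_antisymm (hFle1 r) h, fun h => h.ge⟩
    rw [this]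
    exact hA
  refine ⟨main, ?_⟩
  have hsum : (∑' n : ℕ, P {ω | (∀ k < n, R k ω < R n ω) ∧ ∀ i, x i ≤ R n ω * S ω i}) =
      ∑' n : ℕ, ∫⁻ r, ENNReal.ofReal (g r * F r ^ n) ∂μ :=
    tsum_congr fun n => main n
  have hmf : ∀ m : ℕ, AEMeasurable (fun r : ℝ => ENNReal.ofReal (g r * F r ^ m)) μ :=
    fun m => ((hgmeas.mul (hFcont.measurable.pow_const m)).ennreal_ofReal).aemeasurable
  rw [hsum, ← lintegral_tsum hmf]
  refine lintegral_congr_ae ?_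
  filter_upwards [hFlt] with r hr
  have h0F := hF0 r
  calc (∑' n : ℕ, ENNReal.ofReal (g r * F r ^ n))
      = ∑' n : ℕ, ENNReal.ofReal (g r) * ENNReal.ofReal (F r) ^ n := by
        refine tsum_congr fun n => ?_
        rw [ENNReal.ofReal_mul (hgnonneg r), ENNReal.ofReal_pow h0F]
    _ = ENNReal.ofReal (g r) * (1 - ENNReal.ofReal (F r))⁻¹ := by
        rw [ENNReal.tsum_mul_left, ENNReal.tsum_geometric]
    _ = ENNReal.ofReal (g r * (1 - F r)⁻¹) := by
        rw [← ENNReal.ofReal_one, ← ENNReal.ofReal_sub _ h0F,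
          ← ENNReal.ofReal_inv_of_pos (by linarith),
          ← ENNReal.ofReal_mul (hgnonneg r)]
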